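/- Preservation of the Claim-B exclusion region under an R₄ update step: let Ω ⊆ S and let (c,p) ∈ Ω satisfy Ω ∩ ψ_B(c,p) = ∅. Then for every threshold t > 0, writing Ω' for the image of Ω under U_{4,t} and (c',p') = U_{4,t}(c,p), one has Ω' ∩ ψ_B(c',p') = ∅. -/

import Mathlib

/-- The RMM state space `S = {(x_C, x_P) : 0 ≤ x_C ≤ M, 0 ≤ x_P, x_C + x_P ≤ N}`. -/
def RMMState (N M : ℕ) : Set (ℤ × ℤ) :=
  {x | 0 ≤ x.1 ∧ x.1 ≤ (M : ℤ) ∧ 0 ≤ x.2 ∧ x.1 + x.2 ≤ (N : ℤ)}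

/-- The reaction rates `λ₁, λ₂, λ₃, λ₄` (indexed by `Fin 4`, so reaction `Rᵢ` has index `i-1`). -/
noncomputable def RMMrate (k₁ k₂ k₃ k₄ : ℝ) (N M : ℕ) (i : Fin 4) (x : ℤ × ℤ) : ℝ :=
  match i with
  | 0 => k₁ * ((N : ℝ) - (x.1 : ℝ) - (x.2 : ℝ)) * ((M : ℝ) - (x.1 : ℝ))
  | 1 => k₂ * (x.1 : ℝ)
  | 2 => k₃ * (x.1 : ℝ)
  | 3 => k₄ * (x.2 : ℝ) * ((M : ℝ) - (x.1 : ℝ))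

/-- The reaction displacements `R₁ = (1,0)`, `R₂ = (-1,0)`, `R₃ = (-1,1)`, `R₄ = (1,-1)`. -/
def RMMdisp : Fin 4 → ℤ × ℤ
  | 0 => (1, 0)
  | 1 => (-1, 0)
  | 2 => (-1, 1)
  | 3 => (1, -1)

/-- The coupled one-step update `U_{i,t}`: move by `Rᵢ` if `λᵢ(x) ≥ t`, stay put otherwise. -/
noncomputable def RMMupdate (k₁ k₂ k₃ k₄ : ℝ) (N M : ℕ) (i : Fin 4) (t : ℝ)
    (x : ℤ × ℤ) : ℤ × ℤ :=
  if RMMrate k₁ k₂ k₃ k₄ N M i x ≥ t then x + RMMdisp i else x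

/-- Claim-A exclusion region `ψ_A(c,p)`. -/
def psiA (c p : ℤ) : Set (ℤ × ℤ) :=
  {x | x.2 < p} ∪ {x | x.1 < c ∧ x.1 + x.2 ≤ c + p}

/-- Claim-B exclusion region `ψ_B(c,p)`. -/
def psiB (c p : ℤ) : Set (ℤ × ℤ) :=
  {x | x.2 > p} ∪ {x | x.1 > c ∧ x.1 + x.2 > c + p}

/-- The coupled flow: composition of the one-step updates along a list of parameters. -/
noncomputable def RMMflow (k₁ k₂ k₃ k₄ : ℝ) (N M : ℕ) (L : List (Fin 4 × ℝ))
    (x : ℤ × ℤ) : ℤ × ℤ :=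
  L.foldl (fun y q => RMMupdate k₁ k₂ k₃ k₄ N M q.1 q.2 y) x

/-- Preservation of the Claim-B exclusion region under an R4 update step. -/
theorem psiB_preserved_R4 (k₁ k₂ k₃ k₄ : ℝ)
    (hk₁ : 0 < k₁) (hk₂ : 0 < k₂) (hk₃ : 0 < k₃) (hk₄ : 0 < k₄)
    (N M : ℕ) (hM : 1 ≤ M) (hMN : M ≤ N)
    (Ω : Set (ℤ × ℤ)) (hΩ : Ω ⊆ RMMState N M)
    (c p : ℤ) (hcp : (c, p) ∈ Ω)
    (hdisj : Ω ∩ psiB c p = ∅)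
    (t : ℝ) (ht : 0 < t) :
    (RMMupdate k₁ k₂ k₃ k₄ N M 3 t '' Ω) ∩
      psiB (RMMupdate k₁ k₂ k₃ k₄ N M 3 t (c, p)).1
        (RMMupdate k₁ k₂ k₃ k₄ N M 3 t (c, p)).2 = ∅ := by
  rw [Set.eq_empty_iff_forall_notMem]
  rintro y ⟨⟨x, hxΩ, rfl⟩, hy⟩
  have hexcl : ∀ z ∈ Ω, z.2 ≤ p ∧ (z.1 ≤ c ∨ z.1 + z.2 ≤ c + p) := by
    intro z hz
    have h : z ∉ psiB c p := fun hmem =>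
      Set.eq_empty_iff_forall_notMem.mp hdisj z ⟨hz, hmem⟩
    simp only [psiB, Set.mem_union, Set.mem_setOf_eq, not_or, not_and, not_lt] at h
    omega
  obtain ⟨hx2p, hxor⟩ := hexcl x hxΩ
  obtain ⟨hx1, hx1M, hx2, hxN⟩ := hΩ hxΩ
  obtain ⟨hc0, hcM, hp0, hcpN⟩ := hΩ hcp
  have hp0' : (0:ℤ) ≤ p := hp0
  have hcM' : c ≤ (M:ℤ) := hcM
  have hx1M' : x.1 ≤ (M:ℤ) := hx1M
  simp only [RMMupdate, RMMrate, RMMdisp] at hy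
  by_cases h1 : k₄ * ((p:ℤ):ℝ) * ((M:ℝ) - ((c:ℤ):ℝ)) ≥ t <;>
    by_cases h2 : k₄ * ((x.2:ℤ):ℝ) * ((M:ℝ) - ((x.1:ℤ):ℝ)) ≥ t <;>
    simp only [h1, h2, if_true, if_false] at hy
  · -- both fire
    simp only [psiB, Set.mem_union, Set.mem_setOf_eq, Prod.mk_add_mk, Prod.fst_add, Prod.snd_add] at hy
    omega
  · -- (c,p) fires, x doesn't
    simp only [psiB, Set.mem_union, Set.mem_setOf_eq, Prod.mk_add_mk] at hy
    have hx2p1 : x.2 ≤ p - 1 := by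
      by_contra hcon
      have hx2eq : x.2 = p := by omega
      have hp0r : (0:ℝ) ≤ (p:ℝ) := by exact_mod_cast hp0'
      have hMcr : (c:ℝ) ≤ (M:ℝ) := by exact_mod_cast hcM'
      have hppos : (0:ℝ) < (p:ℝ) := by nlinarith [ht, h1, mul_nonneg hk₄.le (sub_nonneg.mpr hMcr)]
      have hx2r : ((x.2:ℤ):ℝ) = ((p:ℤ):ℝ) := by exact_mod_cast hx2eq
      have hrate : k₄ * ((x.2:ℤ):ℝ) * ((M:ℝ) - ((x.1:ℤ):ℝ)) <
          k₄ * ((p:ℤ):ℝ) * ((M:ℝ) - ((c:ℤ):ℝ)) := lt_of_lt_of_le (lt_of_not_ge h2) h1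
      rw [hx2r] at hrate
      have hcx1 : ((c:ℤ):ℝ) < ((x.1:ℤ):ℝ) := by nlinarith [mul_pos hk₄ hppos]
      have : c < x.1 := by exact_mod_cast hcx1
      omega
    omega
  · -- x fires, (c,p) doesn't
    simp only [psiB, Set.mem_union, Set.mem_setOf_eq, Prod.mk_add_mk, Prod.fst_add, Prod.snd_add] at hy
    omega
  · -- neither fires
    simp only [psiB, Set.mem_union, Set.mem_setOf_eq, Prod.mk_add_mk] at hy
    omega
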